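/- arXiv:2403.03362 — 5 statements merged into one kernel-verified Lean document; each statement's English description precedes it below -/
import Mathlib

section
/- Let f : ℝ^d → ℝ be differentiable and convex. Then for any w ∈ ℝ^d and any t ≥ 0, the gradient norm is non-decreasing along the gradient direction: ‖∇f(w + t∇f(w))‖ ≥ ‖∇f(w)‖. -/
theorem gradient_norm_nondecreasing_along_gradient
    {d : ℕ} (f : EuclideanSpace ℝ (Fin d) → ℝ)
    (hdiff : Differentiable ℝ f) (hconv : ConvexOn ℝ Set.univ f)
    (w : EuclideanSpace ℝ (Fin d)) (t : ℝ) (ht : 0 ≤ t) :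
    ‖gradient f w‖ ≤ ‖gradient f (w + t • gradient f w)‖ := by
  rcases eq_or_lt_of_le ht with rfl | ht
  · simp
  set u := gradient f w with hu
  set x := w + t • u with hx
  -- the 1-dim restriction
  set g : ℝ → ℝ := fun s => f (w + s • u) with hg
  have hline : ∀ s : ℝ, HasDerivAt (fun s : ℝ => w + s • u) u s := fun s => by
    simpa using ((hasDerivAt_id s).smul_const u).const_add w
  have hgd : ∀ s : ℝ, HasDerivAt g (inner ℝ (gradient f (w + s • u)) u : ℝ) s := by
    intro s
    have h1 : HasGradientAt f (gradient f (w + s • u)) (w + s • u) :=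
      (hdiff _).hasGradientAt
    have h2 := h1.hasFDerivAt.comp_hasDerivAt s (hline s)
    simp [g, InnerProductSpace.toDual] at h2 ⊢
    exact h2
  have hgc : ConvexOn ℝ Set.univ g := by
    have := hconv.comp_affineMap
      (AffineMap.lineMap w (w + u) : ℝ →ᵃ[ℝ] EuclideanSpace ℝ (Fin d))
    convert this using 1
    case e'_4 | e'_5 | e'_6 | e'_9 | e'_11 => rfl
    ext s
    simp [g, AffineMap.lineMap_apply, Function.comp]
    congr 1
    module
  -- monotonicity of derivative of a convex function
  have h0 : (inner ℝ u u : ℝ) ≤ inner ℝ (gradient f x) u := by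
    have hle1 : (inner ℝ (gradient f w) u : ℝ) ≤ slope g 0 t := by
      have := hgc.le_slope_of_hasDerivAt (Set.mem_univ 0) (Set.mem_univ t) ht
        (by simpa using hgd 0)
      simpa using this
    have hle2 : slope g 0 t ≤ (inner ℝ (gradient f x) u : ℝ) := by
      have := hgc.slope_le_of_hasDerivAt (Set.mem_univ 0) (Set.mem_univ t) ht
        (by simpa [hx] using hgd t)
      simpa using this
    exact (hle1.trans hle2)
  have hcs : (inner ℝ (gradient f x) u : ℝ) ≤ ‖gradient f x‖ * ‖u‖ :=
    real_inner_le_norm _ _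
  have key : ‖u‖ * ‖u‖ ≤ ‖gradient f x‖ * ‖u‖ := by
    calc ‖u‖ * ‖u‖ = inner ℝ u u := (real_inner_self_eq_norm_mul_norm u).symm
    _ ≤ inner ℝ (gradient f x) u := h0
    _ ≤ ‖gradient f x‖ * ‖u‖ := hcs
  rcases eq_or_ne u 0 with h | h
  · simp [← hu, h]
  · exact le_of_mul_le_mul_right key (norm_pos_iff.mpr h)
end

section
/- Let f : ℝ^d → ℝ be L-smooth and μ-strongly convex with minimizer w*. If at each iteration k we replace w_k by any point w_k⁺ with f(w_k⁺) ≤ f(w_k) and then set w_{k+1} = w_k⁺ - η_k ∇f(w_k⁺) with 0 < η_k < 2/L, then f(w_K) - f(w*) ≤ ∏_{i=0}^{K-1} [1 - 2μη_i(1 - η_i L/2)] · (f(w_0) - f(w*)). -/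
open RealInnerProductSpace

lemma descent_lemma {d : ℕ} (f : EuclideanSpace ℝ (Fin d) → ℝ) (L : ℝ)
    (hdiff : Differentiable ℝ f)
    (hlip : ∀ x y, ‖gradient f x - gradient f y‖ ≤ L * ‖x - y‖)
    (x y : EuclideanSpace ℝ (Fin d)) :
    f y ≤ f x + ⟪gradient f x, y - x⟫ + L / 2 * ‖y - x‖ ^ 2 := by
  set v := y - x with hv
  have hcurve : ∀ t : ℝ, HasDerivAt (fun t : ℝ => x + t • v) v t := by
    intro t
    simpa using ((hasDerivAt_id t).smul_const v).const_add x
  have hg : ∀ t : ℝ, HasDerivAt (fun t : ℝ => f (x + t • v))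
      ⟪gradient f (x + t • v), v⟫ t := by
    intro t
    have h2 := (hdiff (x + t • v)).hasGradientAt.hasFDerivAt
    exact h2.comp_hasDerivAt t (hcurve t)
  set φ : ℝ → ℝ := fun t => f (x + t • v) - t * ⟪gradient f x, v⟫ - L / 2 * t ^ 2 * ‖v‖ ^ 2 with hφ
  have hφ' : ∀ t : ℝ, HasDerivAt φ
      (⟪gradient f (x + t • v), v⟫ - ⟪gradient f x, v⟫ - L * t * ‖v‖ ^ 2) t := by
    intro t
    have h1 : HasDerivAt (fun t : ℝ => t * ⟪gradient f x, v⟫) ⟪gradient f x, v⟫ t := by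
      simpa using (hasDerivAt_id t).mul_const ⟪gradient f x, v⟫
    have h2 : HasDerivAt (fun t : ℝ => L / 2 * t ^ 2 * ‖v‖ ^ 2) (L * t * ‖v‖ ^ 2) t := by
      have := ((hasDerivAt_pow 2 t).const_mul (L / 2)).mul_const (‖v‖ ^ 2)
      refine this.congr_deriv ?_
      ring
    exact ((hg t).sub h1).sub h2
  have hder : ∀ t ∈ Set.Icc (0:ℝ) 1,
      ⟪gradient f (x + t • v), v⟫ - ⟪gradient f x, v⟫ - L * t * ‖v‖ ^ 2 ≤ 0 := by
    intro t ht
    have h1 : ⟪gradient f (x + t • v) - gradient f x, v⟫ ≤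
        ‖gradient f (x + t • v) - gradient f x‖ * ‖v‖ := real_inner_le_norm _ _
    have h2 : ‖gradient f (x + t • v) - gradient f x‖ ≤ L * (t * ‖v‖) := by
      have := hlip (x + t • v) x
      simpa [norm_smul, abs_of_nonneg ht.1, mul_assoc] using this
    have h3 : ⟪gradient f (x + t • v) - gradient f x, v⟫ =
        ⟪gradient f (x + t • v), v⟫ - ⟪gradient f x, v⟫ := inner_sub_left _ _ _
    nlinarith [norm_nonneg v, mul_le_mul_of_nonneg_right h2 (norm_nonneg v)]
  have hanti : AntitoneOn φ (Set.Icc 0 1) := by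
    apply antitoneOn_of_deriv_nonpos (convex_Icc 0 1)
    · exact fun t _ => (hφ' t).continuousAt.continuousWithinAt
    · exact fun t _ => (hφ' t).differentiableAt.differentiableWithinAt
    · intro t ht
      rw [interior_Icc] at ht
      rw [(hφ' t).deriv]
      exact hder t ⟨le_of_lt ht.1, le_of_lt ht.2⟩
  have h01 := hanti (Set.left_mem_Icc.2 zero_le_one) (Set.right_mem_Icc.2 zero_le_one) zero_le_one
  simp only [hφ, zero_smul, add_zero, one_smul, one_mul, one_pow, zero_mul, zero_pow,
    mul_zero, sub_zero] at h01
  have hxy : x + v = y := by simp [hv]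
  rw [hxy] at h01
  linarith

theorem gd_with_teleportation_sc_rate
    {d : ℕ} (f : EuclideanSpace ℝ (Fin d) → ℝ) (L μ : ℝ)
    (hL : 0 < L) (hμ : 0 < μ)
    (hdiff : Differentiable ℝ f)
    (hlip : ∀ x y, ‖gradient f x - gradient f y‖ ≤ L * ‖x - y‖)
    (hsc : ∀ x y, f y ≥ f x + ⟪gradient f x, y - x⟫ + μ / 2 * ‖y - x‖ ^ 2)
    (wstar : EuclideanSpace ℝ (Fin d)) (hmin : IsMinOn f Set.univ wstar)
    (w wp : ℕ → EuclideanSpace ℝ (Fin d)) (η : ℕ → ℝ)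
    (hη : ∀ k, 0 < η k ∧ η k < 2 / L)
    (htel : ∀ k, f (wp k) ≤ f (w k))
    (hupd : ∀ k, w (k + 1) = wp k - η k • gradient f (wp k))
    (K : ℕ) :
    f (w K) - f wstar ≤
      (∏ i ∈ Finset.range K, (1 - 2 * μ * η i * (1 - η i * L / 2))) *
        (f (w 0) - f wstar) := by
  have hminle : ∀ z, f wstar ≤ f z := fun z => hmin (Set.mem_univ z)
  rcases subsingleton_or_nontrivial (EuclideanSpace ℝ (Fin d)) with hss | hnt
  · have h1 : w K = wstar := Subsingleton.elim _ _
    have h2 : w 0 = wstar := Subsingleton.elim _ _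
    rw [h1, h2]
    simp
  · -- μ ≤ L
    obtain ⟨u, hu⟩ := exists_ne (0 : EuclideanSpace ℝ (Fin d))
    have hμL : μ ≤ L := by
      have h1 := hsc 0 u
      have h2 := hsc u 0
      have hun : (0:ℝ) < ‖u‖ := norm_pos_iff.2 hu
      have h3 : ⟪gradient f u - gradient f 0, u⟫ ≤ ‖gradient f u - gradient f 0‖ * ‖u‖ :=
        real_inner_le_norm _ _
      have h4 : ‖gradient f u - gradient f 0‖ * ‖u‖ ≤ L * ‖u‖ * ‖u‖ :=
        mul_le_mul_of_nonneg_right (by simpa using hlip u 0) (norm_nonneg u)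
      have h5 : ⟪gradient f u - gradient f 0, u⟫ =
          ⟪gradient f u, u⟫ - ⟪gradient f 0, u⟫ := inner_sub_left _ _ _
      simp only [sub_zero, zero_sub, inner_neg_right, norm_neg] at h1 h2
      nlinarith [mul_pos hun hun]
    -- PL inequality
    have hPL : ∀ z, 2 * μ * (f z - f wstar) ≤ ‖gradient f z‖ ^ 2 := by
      intro z
      set g := gradient f z with hg
      have h1 := hsc z wstar
      have h2 : ⟪g, z - wstar⟫ ≤ ‖g‖ * ‖z - wstar‖ := real_inner_le_norm _ _
      have h3 : ⟪g, wstar - z⟫ = -⟪g, z - wstar⟫ := by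
        rw [← inner_neg_right]; congr 1; abel
      have h4 : ‖wstar - z‖ = ‖z - wstar‖ := norm_sub_rev _ _
      rw [h3, h4] at h1
      nlinarith [sq_nonneg (‖g‖ - μ * ‖z - wstar‖), norm_nonneg (z - wstar), norm_nonneg g]
    -- per-step
    have hstep : ∀ k, f (w (k + 1)) - f wstar ≤
        (1 - 2 * μ * η k * (1 - η k * L / 2)) * (f (w k) - f wstar) := by
      intro k
      set p := wp k with hp
      set g := gradient f p with hg
      obtain ⟨hη1, hη2⟩ := hη k
      have hηL : η k * L < 2 := by
        rw [lt_div_iff₀ hL] at hη2; linarith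
      have hd := descent_lemma f L hdiff hlip p (p - η k • g)
      have h2 : (p - η k • g) - p = -(η k • g) := by abel
      rw [h2] at hd
      have h3 : ⟪g, -(η k • g)⟫ = -(η k * ‖g‖ ^ 2) := by
        rw [inner_neg_right, real_inner_smul_right, real_inner_self_eq_norm_sq]
      have h4 : ‖-(η k • g)‖ ^ 2 = η k ^ 2 * ‖g‖ ^ 2 := by
        rw [norm_neg, norm_smul]
        simp [abs_of_pos hη1, mul_pow]
      rw [h3, h4, ← hupd k] at hd
      have hpl := hPL p
      have htl := htel k
      have hc : 0 < η k * (1 - η k * L / 2) := by nlinarith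
      have hfac : 0 ≤ 1 - 2 * μ * η k * (1 - η k * L / 2) := by
        nlinarith [mul_nonneg hμ.le (sq_nonneg (η k * L - 1))]
      have hwpf : 0 ≤ f p - f wstar := by linarith [hminle p]
      rw [← hg] at hpl
      nlinarith [mul_le_mul_of_nonneg_left hpl hc.le, mul_nonneg hfac (sub_nonneg.2 htl)]
    -- induction
    induction K with
    | zero => simp
    | succ n ih =>
      rw [Finset.prod_range_succ]
      have hfacn : 0 ≤ 1 - 2 * μ * η n * (1 - η n * L / 2) := by
        obtain ⟨hη1, hη2⟩ := hη n
        have hηL : η n * L < 2 := by rw [lt_div_iff₀ hL] at hη2; linarith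
        nlinarith [mul_nonneg hμ.le (sq_nonneg (η n * L - 1))]
      calc f (w (n + 1)) - f wstar
          ≤ (1 - 2 * μ * η n * (1 - η n * L / 2)) * (f (w n) - f wstar) := hstep n
        _ ≤ (1 - 2 * μ * η n * (1 - η n * L / 2)) *
            ((∏ i ∈ Finset.range n, (1 - 2 * μ * η i * (1 - η i * L / 2))) *
              (f (w 0) - f wstar)) := mul_le_mul_of_nonneg_left ih hfacn
        _ = _ := by ring
end

section
/- Let f : ℝ^d → ℝ be L-smooth and μ-strongly convex with minimizer w*, and let T: ℝ^d → ℝ^d be any non-expansive map with fixed point w* satisfying f(T(w)) ≤ f(w). Then GD interleaved with applications of T, i.e. w_{k+1} = T(w_k) - η_k∇f(T(w_k)), satisfies f(w_K) - f(w*) ≤ (L/μ)·∏_{i=0}^{K-1} max{(1-η_iL)², (1-η_iμ)²}·(f(w_0) - f(w*)). -/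
open RealInnerProductSpace

variable {d : ℕ}
abbrev E (d : ℕ) := EuclideanSpace ℝ (Fin d)

-- directional derivative along a line
lemma line_hasDerivAt (f : E d → ℝ) (hdiff : Differentiable ℝ f) (x v : E d) (t : ℝ) :
    HasDerivAt (fun s : ℝ => f (x + s • v)) ⟪gradient f (x + t • v), v⟫ t := by
  have h1 : HasDerivAt (fun s : ℝ => x + s • v) v t := by
    simpa using ((hasDerivAt_id t).smul_const v).const_add x
  have h2 : HasGradientAt f (gradient f (x + t • v)) (x + t • v) :=
    (hdiff _).hasGradientAt
  have h3 := (hdiff (x + t • v)).hasFDerivAt.comp_hasDerivAt t h1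
  rw [gradient, InnerProductSpace.toDual_symm_apply]
  exact h3

lemma descent (f : E d → ℝ) (L : ℝ) (hL : 0 ≤ L) (hdiff : Differentiable ℝ f)
    (hlip : ∀ x y, ‖gradient f x - gradient f y‖ ≤ L * ‖x - y‖) (x y : E d) :
    f y ≤ f x + ⟪gradient f x, y - x⟫ + L / 2 * ‖y - x‖ ^ 2 := by
  set v := y - x with hv
  have key : f (x + (1:ℝ) • v) - (1:ℝ) * ⟪gradient f x, v⟫ - L / 2 * (1:ℝ)^2 * ‖v‖^2
      ≤ f (x + (0:ℝ) • v) - (0:ℝ) * ⟪gradient f x, v⟫ - L / 2 * (0:ℝ)^2 * ‖v‖^2 := by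
    set g : ℝ → ℝ := fun t => f (x + t • v) - t * ⟪gradient f x, v⟫ - L / 2 * t^2 * ‖v‖^2 with hg
    have hgd : ∀ t : ℝ, HasDerivAt g
        (⟪gradient f (x + t • v), v⟫ - ⟪gradient f x, v⟫ - L * t * ‖v‖^2) t := by
      intro t
      have h1 := line_hasDerivAt f hdiff x v t
      have h2 : HasDerivAt (fun t : ℝ => t * ⟪gradient f x, v⟫) ⟪gradient f x, v⟫ t := by
        simpa using (hasDerivAt_id t).mul_const _
      have h3 : HasDerivAt (fun t : ℝ => L / 2 * t^2 * ‖v‖^2) (L * t * ‖v‖^2) t := by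
        have := ((hasDerivAt_pow 2 t).const_mul (L/2)).mul_const (‖v‖^2)
        exact this.congr_deriv (by push_cast; ring)
      exact (h1.sub h2).sub h3
    have hderiv_nonpos : ∀ t ∈ Set.Ioo (0:ℝ) 1, deriv g t ≤ 0 := by
      intro t ht
      rw [(hgd t).deriv]
      have h1 : ⟪gradient f (x + t • v) - gradient f x, v⟫ ≤ L * t * ‖v‖^2 := by
        calc ⟪gradient f (x + t • v) - gradient f x, v⟫ ≤ ‖gradient f (x + t • v) - gradient f x‖ * ‖v‖ :=
              real_inner_le_norm _ _
          _ ≤ (L * ‖(x + t • v) - x‖) * ‖v‖ := by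
              gcongr; exact hlip _ _
          _ = L * t * ‖v‖^2 := by
              have : ‖(x + t • v) - x‖ = t * ‖v‖ := by
                simp [norm_smul, abs_of_pos ht.1]
              rw [this]; ring
      linarith [h1, inner_sub_left (𝕜 := ℝ) (gradient f (x + t • v)) (gradient f x) v]
    have hcont : ContinuousOn g (Set.Icc 0 1) := by
      have : Continuous g := by
        refine ((hdiff.continuous.comp ?_).sub (continuous_id.mul continuous_const)).sub
          ((continuous_const.mul (continuous_pow 2)).mul continuous_const)
        exact continuous_const.add (continuous_id.smul continuous_const)
      exact this.continuousOn
    have hanti : AntitoneOn g (Set.Icc 0 1) := by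
      apply antitoneOn_of_deriv_nonpos (convex_Icc 0 1) hcont
      · intro t ht
        rw [interior_Icc] at ht
        exact (hgd t).differentiableAt.differentiableWithinAt
      · intro t ht
        rw [interior_Icc] at ht
        exact hderiv_nonpos t ht
    exact hanti (by norm_num) (by norm_num) (by norm_num)
  simp only [one_smul, zero_smul, add_zero] at key
  have hxy : x + v = y := by rw [hv]; abel
  rw [hxy] at key
  nlinarith [key]

-- convexity of h = f - μ/2‖·‖² in first-order form
lemma h_convex (f : E d → ℝ) (μ : ℝ)
    (hsc : ∀ x y, f y ≥ f x + ⟪gradient f x, y - x⟫ + μ / 2 * ‖y - x‖ ^ 2) (x y : E d) :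
    f y - μ / 2 * ‖y‖ ^ 2 ≥ f x - μ / 2 * ‖x‖ ^ 2 + ⟪gradient f x - μ • x, y - x⟫ := by
  have h1 := hsc x y
  have h2 : ⟪gradient f x - μ • x, y - x⟫
      = ⟪gradient f x, y - x⟫ - μ * ⟪x, y - x⟫ := by
    rw [inner_sub_left, real_inner_smul_left]
  have h3 : ‖y - x‖ ^ 2 = ‖y‖ ^ 2 - 2 * ⟪y, x⟫ + ‖x‖ ^ 2 := by
    have := norm_sub_sq_real y x
    linarith [this]
  have h4 : ⟪x, y - x⟫ = ⟪y, x⟫ - ‖x‖ ^ 2 := by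
    rw [inner_sub_right, real_inner_self_eq_norm_sq, real_inner_comm]
  have h6 : μ / 2 * ‖y - x‖ ^ 2 = μ / 2 * ‖y‖ ^ 2 - μ * ⟪x, y - x⟫ - μ / 2 * ‖x‖ ^ 2 := by
    rw [h3, h4]; ring
  linarith [h1]

-- descent for h
lemma h_descent (f : E d → ℝ) (L μ : ℝ) (hL : 0 ≤ L) (hdiff : Differentiable ℝ f)
    (hlip : ∀ x y, ‖gradient f x - gradient f y‖ ≤ L * ‖x - y‖) (x y : E d) :
    f y - μ / 2 * ‖y‖ ^ 2 ≤ f x - μ / 2 * ‖x‖ ^ 2 + ⟪gradient f x - μ • x, y - x⟫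
      + (L - μ) / 2 * ‖y - x‖ ^ 2 := by
  have h1 := descent f L hL hdiff hlip x y
  have h2 : ⟪gradient f x - μ • x, y - x⟫
      = ⟪gradient f x, y - x⟫ - μ * ⟪x, y - x⟫ := by
    rw [inner_sub_left, real_inner_smul_left]
  have h3 : ‖y - x‖ ^ 2 = ‖y‖ ^ 2 - 2 * ⟪y, x⟫ + ‖x‖ ^ 2 := by
    have := norm_sub_sq_real y x
    linarith [this]
  have h4 : ⟪x, y - x⟫ = ⟪y, x⟫ - ‖x‖ ^ 2 := by
    rw [inner_sub_right, real_inner_self_eq_norm_sq, real_inner_comm]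
  have h6 : μ / 2 * ‖y - x‖ ^ 2 = μ / 2 * ‖y‖ ^ 2 - μ * ⟪x, y - x⟫ - μ / 2 * ‖x‖ ^ 2 := by
    rw [h3, h4]; ring
  linarith [h1]

-- cocoercivity family: for all t, ⟪D, x - y⟫ ≥ 2t‖D‖² - (L-μ)t²‖D‖²
lemma coco (f : E d → ℝ) (L μ : ℝ) (hL : 0 ≤ L) (hdiff : Differentiable ℝ f)
    (hlip : ∀ x y, ‖gradient f x - gradient f y‖ ≤ L * ‖x - y‖)
    (hsc : ∀ x y, f y ≥ f x + ⟪gradient f x, y - x⟫ + μ / 2 * ‖y - x‖ ^ 2)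
    (x y : E d) (t : ℝ) :
    ⟪(gradient f x - μ • x) - (gradient f y - μ • y), x - y⟫
      ≥ 2 * t * ‖(gradient f x - μ • x) - (gradient f y - μ • y)‖ ^ 2
        - (L - μ) * t ^ 2 * ‖(gradient f x - μ • x) - (gradient f y - μ • y)‖ ^ 2 := by
  set Dx := gradient f x - μ • x with hDx
  set Dy := gradient f y - μ • y with hDy
  set D := Dx - Dy with hD
  -- first inequality: z = y + t • D, lower via convexity at x, upper via descent at y
  have k1 : f x - μ/2*‖x‖^2 + ⟪Dx, (y + t • D) - x⟫ ≤
      f y - μ/2*‖y‖^2 + ⟪Dy, (y + t • D) - y⟫ + (L-μ)/2 * ‖(y + t • D) - y‖^2 := by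
    have a1 := h_convex f μ hsc x (y + t • D)
    have a2 := h_descent f L μ hL hdiff hlip y (y + t • D)
    linarith
  have k2 : f y - μ/2*‖y‖^2 + ⟪Dy, (x + t • (-D)) - y⟫ ≤
      f x - μ/2*‖x‖^2 + ⟪Dx, (x + t • (-D)) - x⟫ + (L-μ)/2 * ‖(x + t • (-D)) - x‖^2 := by
    have a1 := h_convex f μ hsc y (x + t • (-D))
    have a2 := h_descent f L μ hL hdiff hlip x (x + t • (-D))
    linarith
  have s1 : ((y + t • D) - y) = t • D := by abel
  have s2 : ((x + t • (-D)) - x) = t • (-D) := by abel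
  have s3 : ((y + t • D) - x) = (y - x) + t • D := by abel
  have s4 : ((x + t • (-D)) - y) = (x - y) + t • (-D) := by abel
  rw [s1, s3] at k1
  rw [s2, s4] at k2
  have n1 : ‖t • D‖^2 = t^2 * ‖D‖^2 := by
    rw [norm_smul]; simp [mul_pow]
  have n2 : ‖t • (-D)‖^2 = t^2 * ‖D‖^2 := by
    rw [norm_smul]; simp [mul_pow]
  rw [n1] at k1; rw [n2] at k2
  have e1 : ⟪Dx, (y - x) + t • D⟫ = ⟪Dx, y - x⟫ + t * ⟪Dx, D⟫ := by
    rw [inner_add_right, real_inner_smul_right]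
  have e2 : ⟪Dy, t • D⟫ = t * ⟪Dy, D⟫ := real_inner_smul_right _ _ _
  have e3 : ⟪Dy, (x - y) + t • (-D)⟫ = ⟪Dy, x - y⟫ - t * ⟪Dy, D⟫ := by
    rw [inner_add_right, real_inner_smul_right, inner_neg_right]; ring
  have e4 : ⟪Dx, t • (-D)⟫ = - (t * ⟪Dx, D⟫) := by
    rw [real_inner_smul_right, inner_neg_right]; ring
  have e5 : ⟪Dx, D⟫ - ⟪Dy, D⟫ = ‖D‖^2 := by
    rw [← inner_sub_left, ← hD, real_inner_self_eq_norm_sq]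
  have e6 : ⟪D, x - y⟫ = ⟪Dx, x - y⟫ - ⟪Dy, x - y⟫ := inner_sub_left _ _ _
  have e7 : ⟪Dx, y - x⟫ = -⟪Dx, x - y⟫ := by
    rw [show (y - x : E d) = -(x - y) by abel, inner_neg_right]
  rw [e1, e2] at k1
  rw [e3, e4] at k2
  have e5t : t * ⟪Dx, D⟫ - t * ⟪Dy, D⟫ = t * ‖D‖^2 := by
    rw [← mul_sub, e5]
  linarith [k1, k2, e5t, e6, e7]

lemma grad_min_zero (f : E d → ℝ) (hdiff : Differentiable ℝ f)
    (wstar : E d) (hmin : IsMinOn f Set.univ wstar) : gradient f wstar = 0 := by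
  have h1 : IsLocalMin f wstar := hmin.isLocalMin (by simp [Filter.univ_mem])
  have h2 : fderiv ℝ f wstar = 0 := h1.fderiv_eq_zero
  simp [gradient, h2]

lemma scalar_contraction (L μ η c τ r : ℝ) (hμ : 0 < μ) (hL : 0 < L)
    (hτnn : 0 ≤ τ) (hrnn : 0 ≤ r)
    (hcoco : ∀ t : ℝ, c ≥ 2 * t * τ - (L - μ) * t ^ 2 * τ)
    (hCS : c ^ 2 ≤ τ * r) :
    (1 - η * μ) ^ 2 * r - 2 * (η * (1 - η * μ)) * c + η ^ 2 * τ
      ≤ max ((1 - η * L) ^ 2) ((1 - η * μ) ^ 2) * r := by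
  set M := max ((1 - η * L) ^ 2) ((1 - η * μ) ^ 2) with hM
  have hM1 : (1 - η * L) ^ 2 ≤ M := le_max_left _ _
  have hM2 : (1 - η * μ) ^ 2 ≤ M := le_max_right _ _
  rcases eq_or_lt_of_le hτnn with hτ0 | hτpos
  · have hc0 : c = 0 := by nlinarith [hCS, sq_nonneg c]
    rw [hc0, ← hτ0]
    nlinarith [mul_le_mul_of_nonneg_right hM2 hrnn]
  · have hLμ : μ < L := by
      by_contra hle
      push_neg at hle
      have h := hcoco ((c + 1) / (2 * τ))
      have e : 2 * ((c + 1) / (2 * τ)) * τ = c + 1 := by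
        field_simp
      have hnn : (L - μ) * ((c + 1) / (2 * τ)) ^ 2 * τ ≤ 0 := by
        have h1 : L - μ ≤ 0 := by linarith
        have h2 : 0 ≤ ((c + 1) / (2 * τ)) ^ 2 * τ := mul_nonneg (sq_nonneg _) hτnn
        nlinarith [mul_nonneg h2 (neg_nonneg.2 h1)]
      linarith [h, hnn, e.le, e.ge]
    have hLμ' : 0 < L - μ := by linarith
    have hc1 : τ ≤ (L - μ) * c := by
      have h := hcoco (1 / (L - μ))
      have e : 2 * (1 / (L - μ)) * τ - (L - μ) * (1 / (L - μ)) ^ 2 * τ = τ / (L - μ) := by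
        field_simp
        ring
      rw [e, ge_iff_le, div_le_iff₀ hLμ'] at h
      nlinarith [h]
    have hcpos : 0 ≤ c := by nlinarith [hc1]
    have hcr : c ≤ (L - μ) * r := by
      rcases eq_or_lt_of_le hcpos with hc0 | hcpos'
      · nlinarith [hrnn]
      · nlinarith [hCS, hc1, mul_le_mul_of_nonneg_right hc1 hrnn]
    have hτr : τ ≤ (L - μ) ^ 2 * r := by nlinarith [hc1, hcr]
    by_cases hA : 0 ≤ η * (1 - η * μ)
    · by_cases hB : η * (η * L + η * μ - 2) ≤ 0
      · have k1 : η ^ 2 * τ ≤ η ^ 2 * ((L - μ) * c) :=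
          mul_le_mul_of_nonneg_left hc1 (sq_nonneg η)
        nlinarith [mul_le_mul_of_nonneg_right hM2 hrnn,
          mul_nonneg hcpos (neg_nonneg.2 hB), k1]
      · push_neg at hB
        have k1 : η ^ 2 * τ ≤ η ^ 2 * ((L - μ) * c) :=
          mul_le_mul_of_nonneg_left hc1 (sq_nonneg η)
        have k2 : c * (η * (η * L + η * μ - 2)) ≤ (L - μ) * r * (η * (η * L + η * μ - 2)) :=
          mul_le_mul_of_nonneg_right hcr hB.le
        nlinarith [mul_le_mul_of_nonneg_right hM1 hrnn, k1, k2]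
    · push_neg at hA
      have k1 : η ^ 2 * τ ≤ η ^ 2 * ((L - μ) ^ 2 * r) :=
        mul_le_mul_of_nonneg_left hτr (sq_nonneg η)
      have hA' : (0:ℝ) ≤ -2 * (η * (1 - η * μ)) := by nlinarith
      have k2 : -2 * (η * (1 - η * μ)) * c ≤ -2 * (η * (1 - η * μ)) * ((L - μ) * r) :=
        mul_le_mul_of_nonneg_left hcr hA'
      have id1 : (1 - η * μ) ^ 2 * r + -2 * (η * (1 - η * μ)) * ((L - μ) * r)
          + η ^ 2 * ((L - μ) ^ 2 * r) = (1 - η * L) ^ 2 * r := by ring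
      linarith [mul_le_mul_of_nonneg_right hM1 hrnn, k1, k2, id1]

lemma contraction (f : E d → ℝ) (L μ : ℝ) (hL : 0 < L) (hμ : 0 < μ)
    (hdiff : Differentiable ℝ f)
    (hlip : ∀ x y, ‖gradient f x - gradient f y‖ ≤ L * ‖x - y‖)
    (hsc : ∀ x y, f y ≥ f x + ⟪gradient f x, y - x⟫ + μ / 2 * ‖y - x‖ ^ 2)
    (wstar : E d) (hg0 : gradient f wstar = 0) (p : E d) (η : ℝ) :
    ‖(p - η • gradient f p) - wstar‖ ^ 2
      ≤ max ((1 - η * L) ^ 2) ((1 - η * μ) ^ 2) * ‖p - wstar‖ ^ 2 := by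
  have hcoco0 := coco f L μ hL.le hdiff hlip hsc p wstar
  set g := gradient f p with hgdef
  have hDeq : (gradient f p - μ • p) - (gradient f wstar - μ • wstar)
      = g - μ • (p - wstar) := by
    rw [hg0, ← hgdef, smul_sub]
    abel
  rw [hDeq] at hcoco0
  set u : E d := p - wstar with hu
  set D : E d := g - μ • u with hDdef
  have hexp : ‖(p - η • g) - wstar‖ ^ 2
      = (1 - η * μ) ^ 2 * ‖u‖ ^ 2 - 2 * (η * (1 - η * μ)) * ⟪D, u⟫ + η ^ 2 * ‖D‖ ^ 2 := by
    have hv : (p - η • g) - wstar = (1 - η * μ) • u - η • D := by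
      rw [hDdef, hu, smul_sub, smul_sub, sub_smul, one_smul, smul_smul]
      module
    rw [hv, norm_sub_sq_real, norm_smul, norm_smul, real_inner_smul_left,
      real_inner_smul_right, real_inner_comm u D]
    simp only [Real.norm_eq_abs, mul_pow, sq_abs]
    ring
  rw [hexp]
  have hCS : ⟪D, u⟫ ^ 2 ≤ ‖D‖ ^ 2 * ‖u‖ ^ 2 := by
    have h := real_inner_mul_inner_self_le D u
    rw [real_inner_self_eq_norm_sq, real_inner_self_eq_norm_sq] at h
    nlinarith [h]
  exact scalar_contraction L μ η ⟪D, u⟫ (‖D‖ ^ 2) (‖u‖ ^ 2) hμ hL (sq_nonneg _)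
    (sq_nonneg _) hcoco0 hCS

theorem gd_with_nonexpansive_teleportation_rate
    {d : ℕ} (f : EuclideanSpace ℝ (Fin d) → ℝ) (L μ : ℝ)
    (hL : 0 < L) (hμ : 0 < μ)
    (hdiff : Differentiable ℝ f)
    (hlip : ∀ x y, ‖gradient f x - gradient f y‖ ≤ L * ‖x - y‖)
    (hsc : ∀ x y, f y ≥ f x + ⟪gradient f x, y - x⟫ + μ / 2 * ‖y - x‖ ^ 2)
    (wstar : EuclideanSpace ℝ (Fin d)) (hmin : IsMinOn f Set.univ wstar)
    (T : EuclideanSpace ℝ (Fin d) → EuclideanSpace ℝ (Fin d))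
    (hT : ∀ x y, ‖T x - T y‖ ≤ ‖x - y‖)
    (hTfix : T wstar = wstar)
    (hTdec : ∀ x, f (T x) ≤ f x)
    (w : ℕ → EuclideanSpace ℝ (Fin d)) (η : ℕ → ℝ)
    (hupd : ∀ k, w (k + 1) = T (w k) - η k • gradient f (T (w k)))
    (K : ℕ) :
    f (w K) - f wstar ≤
      (L / μ) * (∏ i ∈ Finset.range K, max ((1 - η i * L) ^ 2) ((1 - η i * μ) ^ 2)) *
        (f (w 0) - f wstar) := by
  have hg0 : gradient f wstar = 0 := grad_min_zero f hdiff wstar hmin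
  set P : ℕ → ℝ := fun K => ∏ i ∈ Finset.range K, max ((1 - η i * L) ^ 2) ((1 - η i * μ) ^ 2)
    with hP
  have hMnn : ∀ i, 0 ≤ max ((1 - η i * L) ^ 2) ((1 - η i * μ) ^ 2) :=
    fun i => le_trans (sq_nonneg _) (le_max_left _ _)
  have hPnn : ∀ K, 0 ≤ P K := fun K => Finset.prod_nonneg fun i _ => hMnn i
  have key : ∀ K, ‖w K - wstar‖ ^ 2 ≤ P K * ‖w 0 - wstar‖ ^ 2 := by
    intro K
    induction K with
    | zero => simp [hP]
    | succ k ih =>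
      have h2 := contraction f L μ hL hμ hdiff hlip hsc wstar hg0 (T (w k)) (η k)
      have h1 : ‖w (k + 1) - wstar‖ ^ 2
          ≤ max ((1 - η k * L) ^ 2) ((1 - η k * μ) ^ 2) * ‖T (w k) - wstar‖ ^ 2 := by
        rw [hupd k]
        exact h2
      have h3 : ‖T (w k) - wstar‖ ≤ ‖w k - wstar‖ := by
        calc ‖T (w k) - wstar‖ = ‖T (w k) - T wstar‖ := by rw [hTfix]
          _ ≤ ‖w k - wstar‖ := hT _ _
      have h4 : ‖T (w k) - wstar‖ ^ 2 ≤ ‖w k - wstar‖ ^ 2 := by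
        nlinarith [norm_nonneg (T (w k) - wstar)]
      have h5 : P (k + 1) = max ((1 - η k * L) ^ 2) ((1 - η k * μ) ^ 2) * P k := by
        rw [hP]
        simp only
        rw [Finset.prod_range_succ]
        ring
      calc ‖w (k + 1) - wstar‖ ^ 2
          ≤ max ((1 - η k * L) ^ 2) ((1 - η k * μ) ^ 2) * ‖T (w k) - wstar‖ ^ 2 := h1
        _ ≤ max ((1 - η k * L) ^ 2) ((1 - η k * μ) ^ 2) * ‖w k - wstar‖ ^ 2 :=
            mul_le_mul_of_nonneg_left h4 (hMnn k)
        _ ≤ max ((1 - η k * L) ^ 2) ((1 - η k * μ) ^ 2) * (P k * ‖w 0 - wstar‖ ^ 2) :=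
            mul_le_mul_of_nonneg_left ih (hMnn k)
        _ = P (k + 1) * ‖w 0 - wstar‖ ^ 2 := by rw [h5]; ring
  have hup : f (w K) - f wstar ≤ L / 2 * ‖w K - wstar‖ ^ 2 := by
    have h := descent f L hL.le hdiff hlip wstar (w K)
    rw [hg0] at h
    simp only [inner_zero_left] at h
    linarith
  have hlow : μ / 2 * ‖w 0 - wstar‖ ^ 2 ≤ f (w 0) - f wstar := by
    have h := hsc wstar (w 0)
    rw [hg0] at h
    simp only [inner_zero_left] at h
    linarith
  have step1 : f (w K) - f wstar ≤ L / 2 * (P K * ‖w 0 - wstar‖ ^ 2) := by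
    have := mul_le_mul_of_nonneg_left (key K) (by positivity : (0:ℝ) ≤ L / 2)
    linarith
  have step2 : P K * ‖w 0 - wstar‖ ^ 2 ≤ P K * (2 / μ * (f (w 0) - f wstar)) := by
    apply mul_le_mul_of_nonneg_left _ (hPnn K)
    have h2 := mul_le_mul_of_nonneg_left hlow (by positivity : (0:ℝ) ≤ 2 / μ)
    have h3 : 2 / μ * (μ / 2 * ‖w 0 - wstar‖ ^ 2) = ‖w 0 - wstar‖ ^ 2 := by
      field_simp
    linarith
  have step3 : L / 2 * (P K * (2 / μ * (f (w 0) - f wstar)))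
      = L / μ * P K * (f (w 0) - f wstar) := by
    field_simp
  calc f (w K) - f wstar ≤ L / 2 * (P K * ‖w 0 - wstar‖ ^ 2) := step1
    _ ≤ L / 2 * (P K * (2 / μ * (f (w 0) - f wstar))) :=
        mul_le_mul_of_nonneg_left step2 (by positivity)
    _ = L / μ * P K * (f (w 0) - f wstar) := step3
end

section
/- The second-order Huber function h₂(x) = -x⁴/8 + 3x²/4 + 3/8 for |x| < 1 and h₂(x) = |x| otherwise, is twice continuously differentiable and convex on ℝ. -/
/-- The second-order Huber function. -/
noncomputable def h2 (x : ℝ) : ℝ :=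
  if |x| < 1 then -x ^ 4 / 8 + 3 * x ^ 2 / 4 + 3 / 8 else |x|

noncomputable def h2d (x : ℝ) : ℝ :=
  if |x| < 1 then (3 * x - x ^ 3) / 2 else if x < 0 then -1 else 1

noncomputable def h2dd (x : ℝ) : ℝ := 3 / 2 * max 0 (1 - x ^ 2)

open Set Filter

lemma isOpen_ball1 : IsOpen {y : ℝ | |y| < 1} :=
  isOpen_lt continuous_abs continuous_const

lemma hasDerivAt_P (x : ℝ) :
    HasDerivAt (fun y : ℝ => -y ^ 4 / 8 + 3 * y ^ 2 / 4 + 3 / 8) ((3 * x - x ^ 3) / 2) x := by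
  have h : HasDerivAt (fun y : ℝ => -y ^ 4 / 8 + 3 * y ^ 2 / 4 + 3 / 8)
      (-(4 * x ^ 3) / 8 + 3 * (2 * x) / 4) x := by
    have h1 : HasDerivAt (fun y : ℝ => y ^ 4) (4 * x ^ 3) x := by
      simpa using hasDerivAt_pow 4 x
    have h2 : HasDerivAt (fun y : ℝ => y ^ 2) (2 * x) x := by
      simpa using hasDerivAt_pow 2 x
    exact ((h1.neg.div_const 8).add ((h2.const_mul 3).div_const 4)).add_const (3 / 8)
  convert h using 1; ring

lemma hasDerivAt_Q (x : ℝ) :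
    HasDerivAt (fun y : ℝ => (3 * y - y ^ 3) / 2) ((3 - 3 * x ^ 2) / 2) x := by
  have h : HasDerivAt (fun y : ℝ => (3 * y - y ^ 3) / 2)
      ((3 * 1 - 3 * x ^ 2) / 2) x := by
    have h1 : HasDerivAt (fun y : ℝ => y ^ 3) (3 * x ^ 2) x := by
      simpa using hasDerivAt_pow 3 x
    exact (((hasDerivAt_id x).const_mul 3).sub h1).div_const 2
  convert h using 1; ring

lemma h2_eq_nonneg {x : ℝ} (hx : 1 ≤ x) : h2 x = x := by
  have : ¬ |x| < 1 := by rw [abs_of_nonneg (by linarith)]; linarith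
  rw [h2, if_neg this, abs_of_nonneg (by linarith)]

lemma h2_eq_nonpos {x : ℝ} (hx : x ≤ -1) : h2 x = -x := by
  have : ¬ |x| < 1 := by rw [abs_of_nonpos (by linarith)]; linarith
  rw [h2, if_neg this, abs_of_nonpos (by linarith)]

lemma h2d_eq_nonneg {x : ℝ} (hx : 1 ≤ x) : h2d x = 1 := by
  have h1 : ¬ |x| < 1 := by rw [abs_of_nonneg (by linarith)]; linarith
  rw [h2d, if_neg h1, if_neg (by linarith)]

lemma h2d_eq_nonpos {x : ℝ} (hx : x ≤ -1) : h2d x = -1 := by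
  have h1 : ¬ |x| < 1 := by rw [abs_of_nonpos (by linarith)]; linarith
  rw [h2d, if_neg h1, if_pos (by linarith)]

lemma hasDerivAt_h2 (x : ℝ) : HasDerivAt h2 (h2d x) x := by
  rcases lt_trichotomy (|x|) 1 with hx | hx | hx
  · -- interior of the quartic region
    rw [h2d, if_pos hx]
    refine (hasDerivAt_P x).congr_of_eventuallyEq ?_
    filter_upwards [isOpen_ball1.mem_nhds hx] with y hy
    rw [h2, if_pos hy]
  · -- |x| = 1
    rcases (abs_eq (by norm_num : (0:ℝ) ≤ 1)).1 hx with h1 | h1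
    · -- x = 1
      subst h1
      rw [h2d_eq_nonneg le_rfl]
      rw [← hasDerivWithinAt_univ, ← Set.Iic_union_Ici (a := (1:ℝ))]
      apply HasDerivWithinAt.union
      · have hP : HasDerivWithinAt (fun y : ℝ => -y ^ 4 / 8 + 3 * y ^ 2 / 4 + 3 / 8)
            1 (Iic 1) 1 := by
          have := (hasDerivAt_P 1).hasDerivWithinAt (s := Iic 1)
          norm_num at this ⊢; exact this
        refine hP.congr_of_eventuallyEq ?_ (by rw [h2_eq_nonneg le_rfl]; norm_num)
        filter_upwards [Ioc_mem_nhdsLE (by norm_num : (-1:ℝ) < 1)] with y hy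
        rcases eq_or_lt_of_le hy.2 with h | h
        · rw [h, h2_eq_nonneg le_rfl]; norm_num
        · rw [h2, if_pos (abs_lt.2 ⟨hy.1, h⟩)]
      · have hid : HasDerivWithinAt (fun y : ℝ => y) 1 (Ici 1) 1 :=
          (hasDerivAt_id 1).hasDerivWithinAt
        exact hid.congr (fun y hy => h2_eq_nonneg hy) (h2_eq_nonneg le_rfl)
    · -- x = -1
      subst h1
      rw [h2d_eq_nonpos le_rfl]
      rw [← hasDerivWithinAt_univ, ← Set.Iic_union_Ici (a := (-1:ℝ))]
      apply HasDerivWithinAt.union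
      · have hid : HasDerivWithinAt (fun y : ℝ => -y) (-1) (Iic (-1)) (-1) := by
          simpa using ((hasDerivAt_neg' (x := (-1:ℝ))).hasDerivWithinAt (s := Iic (-1)))
        exact hid.congr (fun y hy => h2_eq_nonpos hy) (h2_eq_nonpos le_rfl)
      · have hP : HasDerivWithinAt (fun y : ℝ => -y ^ 4 / 8 + 3 * y ^ 2 / 4 + 3 / 8)
            (-1) (Ici (-1)) (-1) := by
          have := (hasDerivAt_P (-1)).hasDerivWithinAt (s := Ici (-1))
          norm_num at this ⊢; exact this
        refine hP.congr_of_eventuallyEq ?_ (by rw [h2_eq_nonpos le_rfl]; norm_num)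
        filter_upwards [Ico_mem_nhdsGE (by norm_num : (-1:ℝ) < 1)] with y hy
        rcases eq_or_lt_of_le hy.1 with h | h
        · rw [← h, h2_eq_nonpos le_rfl]; norm_num
        · rw [h2, if_pos (abs_lt.2 ⟨h, hy.2⟩)]
  · -- |x| > 1
    rcases lt_abs.1 hx with h | h
    · rw [h2d_eq_nonneg h.le]
      refine (hasDerivAt_id x).congr_of_eventuallyEq ?_
      filter_upwards [Ioi_mem_nhds h] with y hy
      exact h2_eq_nonneg (le_of_lt hy)
    · have hx' : x < -1 := by linarith
      rw [h2d_eq_nonpos hx'.le]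
      have hneg : HasDerivAt (fun y : ℝ => -y) (-1) x := by
        simpa using (hasDerivAt_neg' (x := x))
      refine hneg.congr_of_eventuallyEq ?_
      filter_upwards [Iio_mem_nhds hx'] with y hy
      exact h2_eq_nonpos (le_of_lt hy)

lemma hasDerivAt_h2d (x : ℝ) : HasDerivAt h2d (h2dd x) x := by
  rcases lt_trichotomy (|x|) 1 with hx | hx | hx
  · have hdd : h2dd x = (3 - 3 * x ^ 2) / 2 := by
      rw [h2dd, max_eq_right (by nlinarith [abs_lt.1 hx])]; ring
    rw [hdd]
    refine (hasDerivAt_Q x).congr_of_eventuallyEq ?_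
    filter_upwards [isOpen_ball1.mem_nhds hx] with y hy
    rw [h2d, if_pos hy]
  · have hdd : h2dd x = 0 := by
      rw [h2dd, max_eq_left (by nlinarith [hx ▸ sq_abs x])]; ring
    rw [hdd]
    rcases (abs_eq (by norm_num : (0:ℝ) ≤ 1)).1 hx with h1 | h1
    · subst h1
      rw [← hasDerivWithinAt_univ, ← Set.Iic_union_Ici (a := (1:ℝ))]
      apply HasDerivWithinAt.union
      · have hQ : HasDerivWithinAt (fun y : ℝ => (3 * y - y ^ 3) / 2) 0 (Iic 1) 1 := by
          have := (hasDerivAt_Q 1).hasDerivWithinAt (s := Iic 1)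
          norm_num at this; exact this
        refine hQ.congr_of_eventuallyEq ?_ (by rw [h2d_eq_nonneg le_rfl]; norm_num)
        filter_upwards [Ioc_mem_nhdsLE (by norm_num : (-1:ℝ) < 1)] with y hy
        rcases eq_or_lt_of_le hy.2 with h | h
        · rw [h, h2d_eq_nonneg le_rfl]; norm_num
        · rw [h2d, if_pos (abs_lt.2 ⟨hy.1, h⟩)]
      · have hc : HasDerivWithinAt (fun _ : ℝ => (1:ℝ)) 0 (Ici 1) 1 :=
          (hasDerivAt_const 1 1).hasDerivWithinAt
        exact hc.congr (fun y hy => h2d_eq_nonneg hy) (h2d_eq_nonneg le_rfl)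
    · subst h1
      rw [← hasDerivWithinAt_univ, ← Set.Iic_union_Ici (a := (-1:ℝ))]
      apply HasDerivWithinAt.union
      · have hc : HasDerivWithinAt (fun _ : ℝ => (-1:ℝ)) 0 (Iic (-1)) (-1) :=
          (hasDerivAt_const (-1) (-1)).hasDerivWithinAt
        exact hc.congr (fun y hy => h2d_eq_nonpos hy) (h2d_eq_nonpos le_rfl)
      · have hQ : HasDerivWithinAt (fun y : ℝ => (3 * y - y ^ 3) / 2) 0 (Ici (-1)) (-1) := by
          have := (hasDerivAt_Q (-1)).hasDerivWithinAt (s := Ici (-1))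
          norm_num at this; exact this
        refine hQ.congr_of_eventuallyEq ?_ (by rw [h2d_eq_nonpos le_rfl]; norm_num)
        filter_upwards [Ico_mem_nhdsGE (by norm_num : (-1:ℝ) < 1)] with y hy
        rcases eq_or_lt_of_le hy.1 with h | h
        · rw [← h, h2d_eq_nonpos le_rfl]; norm_num
        · rw [h2d, if_pos (abs_lt.2 ⟨h, hy.2⟩)]
  · have hdd : h2dd x = 0 := by
      rw [h2dd, max_eq_left (by nlinarith [sq_abs x])]; ring
    rw [hdd]
    rcases lt_abs.1 hx with h | h
    · refine (hasDerivAt_const x (1:ℝ)).congr_of_eventuallyEq ?_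
      filter_upwards [Ioi_mem_nhds h] with y hy
      exact h2d_eq_nonneg (le_of_lt hy)
    · have hx' : x < -1 := by linarith
      refine (hasDerivAt_const x (-1:ℝ)).congr_of_eventuallyEq ?_
      filter_upwards [Iio_mem_nhds hx'] with y hy
      exact h2d_eq_nonpos (le_of_lt hy)

lemma deriv_h2 : deriv h2 = h2d := funext fun x => (hasDerivAt_h2 x).deriv

lemma deriv_h2d : deriv h2d = h2dd := funext fun x => (hasDerivAt_h2d x).deriv

lemma continuous_h2dd : Continuous h2dd :=
  continuous_const.mul (continuous_const.max (by continuity))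

theorem h2_smooth_and_convex : ContDiff ℝ 2 h2 ∧ ConvexOn ℝ Set.univ h2 := by
  have hdiff : Differentiable ℝ h2 := fun x => (hasDerivAt_h2 x).differentiableAt
  have hdiff' : Differentiable ℝ (deriv h2) := by
    rw [deriv_h2]; exact fun x => (hasDerivAt_h2d x).differentiableAt
  constructor
  · rw [show (2 : WithTop ℕ∞) = 1 + 1 from rfl, contDiff_succ_iff_deriv]
    refine ⟨hdiff, by simp, ?_⟩
    rw [contDiff_one_iff_deriv, deriv_h2, deriv_h2d]
    exact ⟨fun x => (hasDerivAt_h2d x).differentiableAt, continuous_h2dd⟩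
  · apply convexOn_univ_of_deriv2_nonneg hdiff hdiff'
    intro x
    have : deriv^[2] h2 x = h2dd x := by
      simp [Function.iterate_succ, deriv_h2, deriv_h2d]
    rw [this, h2dd]
    positivity
end

section
/- Let g : ℝ → ℝ be differentiable, φ : ℝ → ℝ positively homogeneous (φ(αβ) = αφ(β) for α > 0) with lim_{β→∞} φ(β) = ∞ and lim_{β→∞} φ'(β) < ∞, and let f(w₁, w₂) = g(w₂ φ(w₁ x)) for fixed x > 0 with w₁, w₂ > 0. Then f is invariant under the rescaling (w₁, w₂) ↦ (w₁/α, αw₂), and along this rescaling as α → ∞ the level set {(u,v): f(u,v) = f(w₁,w₂)} is unbounded; if moreover ∂g/∂v ≠ 0 at v = w₂φ(w₁x), the norm of the gradient of f diverges along this path. Hence sup of ‖∇f‖ over the level set is +∞ and the teleportation problem has no finite solution. -/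
open Filter

theorem relu_network_teleportation_illposed
    (g φ : ℝ → ℝ) (hg : Differentiable ℝ g)
    (hφhom : ∀ α : ℝ, 0 < α → ∀ β : ℝ, φ (α * β) = α * φ β)
    (hφtop : Tendsto φ atTop atTop)
    (hφ' : ∃ C : ℝ, Tendsto (deriv φ) atTop (nhds C))
    (x w₁ w₂ : ℝ) (hx : 0 < x) (hw₁ : 0 < w₁) (hw₂ : 0 < w₂)
    (f : EuclideanSpace ℝ (Fin 2) → ℝ)
    (hf : ∀ u, f u = g (u 1 * φ (u 0 * x)))
    (w : EuclideanSpace ℝ (Fin 2)) (hw0 : w 0 = w₁) (hw1 : w 1 = w₂)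
    (p : ℝ → EuclideanSpace ℝ (Fin 2))
    (hp : ∀ α, p α 0 = w₁ / α ∧ p α 1 = α * w₂) :
    (∀ α : ℝ, 0 < α → f (p α) = f w) ∧
      ¬ Bornology.IsBounded {u : EuclideanSpace ℝ (Fin 2) | f u = f w} ∧
      (deriv g (w₂ * φ (w₁ * x)) ≠ 0 →
        Tendsto (fun α => ‖gradient f (p α)‖) atTop atTop) ∧
      (deriv g (w₂ * φ (w₁ * x)) ≠ 0 →
        ¬ BddAbove ((fun u => ‖gradient f u‖) ''
          {u : EuclideanSpace ℝ (Fin 2) | f u = f w})) := by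
  -- φ is linear on positive arguments
  have hlin : ∀ t : ℝ, 0 < t → φ t = t * φ 1 := by
    intro t ht
    have := hφhom t ht 1
    simpa using this
  -- φ 1 > 0
  have hφ1 : 0 < φ 1 := by
    obtain ⟨t, ht1, ht0⟩ := ((hφtop.eventually_ge_atTop 1).and (eventually_gt_atTop 0)).exists
    have := hlin t ht0
    nlinarith
  set k : ℝ := φ 1 * x with hk
  have hkpos : 0 < k := mul_pos hφ1 hx
  -- invariance along the path
  have part1 : ∀ α : ℝ, 0 < α → f (p α) = f w := by
    intro α hα
    rw [hf, hf, hw0, hw1, (hp α).1, (hp α).2]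
    have h1 : w₁ / α * x = α⁻¹ * (w₁ * x) := by field_simp
    rw [h1, hφhom α⁻¹ (by positivity) (w₁ * x)]
    congr 1
    field_simp
  refine ⟨part1, ?_, ?_, ?_⟩
  · -- level set unbounded
    intro hb
    obtain ⟨R, hR⟩ := (isBounded_iff_forall_norm_le).mp hb
    set α : ℝ := (|R| + 1) / w₂ with hαdef
    have hα : 0 < α := by positivity
    have hmem : p α ∈ {u : EuclideanSpace ℝ (Fin 2) | f u = f w} := part1 α hα
    have h1 : |p α 1| ≤ ‖p α‖ := by
      have h := abs_real_inner_le_norm (EuclideanSpace.single (1 : Fin 2) (1:ℝ)) (p α)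
      simpa [EuclideanSpace.inner_single_left, EuclideanSpace.norm_single] using h
    have h2 : p α 1 = |R| + 1 := by
      rw [(hp α).2, hαdef]; field_simp
    have := hR _ hmem
    rw [h2] at h1
    have hR0 : R ≤ |R| := le_abs_self R
    nlinarith [abs_nonneg R, abs_of_pos (show (0:ℝ) < |R| + 1 by positivity)]
  all_goals {
    intro hg'
    -- key gradient lower bound along the path
    have key : ∀ α : ℝ, 0 < α → |deriv g (w₂ * φ (w₁ * x)) * k * w₂| * α ≤ ‖gradient f (p α)‖ := by
      intro α hα
      set G : EuclideanSpace ℝ (Fin 2) → ℝ := fun v => g (k * (v 0 * v 1)) with hG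
      -- f agrees with G on the open set {u | 0 < u 0}
      have hopen : IsOpen {u : EuclideanSpace ℝ (Fin 2) | 0 < u 0} := by
        have : {u : EuclideanSpace ℝ (Fin 2) | 0 < u 0} =
            (EuclideanSpace.proj (0 : Fin 2) : EuclideanSpace ℝ (Fin 2) →L[ℝ] ℝ) ⁻¹' Set.Ioi 0 :=
          rfl
        rw [this]
        exact isOpen_Ioi.preimage (EuclideanSpace.proj (0 : Fin 2)).continuous
      have hpmem : p α ∈ {u : EuclideanSpace ℝ (Fin 2) | 0 < u 0} := by
        show 0 < p α 0
        rw [(hp α).1]; positivity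
      have heq : f =ᶠ[nhds (p α)] G := by
        filter_upwards [hopen.mem_nhds hpmem] with u hu
        have hu0 : (0:ℝ) < u 0 * x := mul_pos hu hx
        rw [hf, hlin _ hu0, hG]
        ring_nf
        congr 1
        rw [hk]
        ring
      -- explicit derivative of G at p α
      set u := p α with hu
      set A : ℝ := k * (u 0 * u 1) with hA
      set L : EuclideanSpace ℝ (Fin 2) →L[ℝ] ℝ :=
        deriv g A • (k • (u 0 • (EuclideanSpace.proj (1:Fin 2) : EuclideanSpace ℝ (Fin 2) →L[ℝ] ℝ)
          + u 1 • (EuclideanSpace.proj (0:Fin 2) : EuclideanSpace ℝ (Fin 2) →L[ℝ] ℝ))) with hL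
      have hGd : HasFDerivAt G L u := by
        have h0 := (EuclideanSpace.proj (0:Fin 2) : EuclideanSpace ℝ (Fin 2) →L[ℝ] ℝ).hasFDerivAt (x := u)
        have h1 := (EuclideanSpace.proj (1:Fin 2) : EuclideanSpace ℝ (Fin 2) →L[ℝ] ℝ).hasFDerivAt (x := u)
        have hin : HasFDerivAt (fun v : EuclideanSpace ℝ (Fin 2) => k * (v 0 * v 1))
            (k • (u 0 • (EuclideanSpace.proj (1:Fin 2) : EuclideanSpace ℝ (Fin 2) →L[ℝ] ℝ)
              + u 1 • (EuclideanSpace.proj (0:Fin 2) : EuclideanSpace ℝ (Fin 2) →L[ℝ] ℝ))) u := by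
          have := (h0.mul h1).const_mul k
          simpa using this
        exact ((hg A).hasDerivAt).comp_hasFDerivAt u hin
      have hfd : HasFDerivAt f L u := hGd.congr_of_eventuallyEq heq
      -- relate to the gradient
      have hdiff : DifferentiableAt ℝ f u := hfd.differentiableAt
      have hgradAt := hdiff.hasGradientAt
      rw [hasGradientAt_iff_hasFDerivAt] at hgradAt
      have huniq : (InnerProductSpace.toDual ℝ _) (gradient f u) = L := hgradAt.unique hfd
      have hval : @inner ℝ _ _ (gradient f u) (EuclideanSpace.single (0 : Fin 2) (1:ℝ))
          = L (EuclideanSpace.single (0 : Fin 2) (1:ℝ)) := by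
        rw [← huniq, InnerProductSpace.toDual_apply_apply]
      have hLe : L (EuclideanSpace.single (0 : Fin 2) (1:ℝ)) = deriv g A * (k * u 1) := by
        simp [hL, PiLp.proj_apply, EuclideanSpace.single_apply]
      have hbound : |L (EuclideanSpace.single (0 : Fin 2) (1:ℝ))| ≤ ‖gradient f u‖ := by
        rw [← hval]
        have h := abs_real_inner_le_norm (gradient f u) (EuclideanSpace.single (0 : Fin 2) (1:ℝ))
        simpa [EuclideanSpace.norm_single] using h
      -- identify A with the fixed value
      have hAval : A = w₂ * φ (w₁ * x) := by
        rw [hA, hu, (hp α).1, (hp α).2, hlin (w₁ * x) (by positivity), hk]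
        field_simp
      have hu1 : u 1 = α * w₂ := (hp α).2
      rw [hLe, hAval, hu1] at hbound
      calc |deriv g (w₂ * φ (w₁ * x)) * k * w₂| * α
          = |deriv g (w₂ * φ (w₁ * x)) * (k * (α * w₂))| := by
            rw [show deriv g (w₂ * φ (w₁ * x)) * (k * (α * w₂))
              = deriv g (w₂ * φ (w₁ * x)) * k * w₂ * α by ring]
            rw [show |deriv g (w₂ * φ (w₁ * x)) * k * w₂ * α|
              = |deriv g (w₂ * φ (w₁ * x)) * k * w₂| * |α| from abs_mul _ _, abs_of_pos hα]
        _ ≤ ‖gradient f u‖ := hbound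
    -- positivity of the coefficient
    have hc : 0 < |deriv g (w₂ * φ (w₁ * x)) * k * w₂| := by
      have : deriv g (w₂ * φ (w₁ * x)) * k * w₂ ≠ 0 := by
        apply mul_ne_zero (mul_ne_zero hg' (ne_of_gt hkpos)) (ne_of_gt hw₂)
      exact abs_pos.mpr this
    have htend : Tendsto (fun α => ‖gradient f (p α)‖) atTop atTop := by
      apply tendsto_atTop_mono' atTop
        (by filter_upwards [eventually_gt_atTop 0] with α hα using key α hα)
      exact Tendsto.const_mul_atTop hc tendsto_id
    first
      | exact htend
      | { intro hbdd
          obtain ⟨M, hM⟩ := hbdd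
          obtain ⟨α, hαM, hα0⟩ :=
            ((htend.eventually_ge_atTop (M + 1)).and (eventually_gt_atTop 0)).exists
          have : ‖gradient f (p α)‖ ≤ M := hM ⟨p α, part1 α hα0, rfl⟩
          linarith }
  }
end
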